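/- Let n, r ≥ 0 with 2r ≤ n and let μ be a partition of n − 2r. Then the number of oscillating tableaux of shape μ and length n satisfies f̃^μ_n = C(n, 2r) · (2r−1)!! · f^μ, where C(n,2r) is the binomial coefficient, (2r−1)!! = (2r−1)(2r−3)⋯3·1 (with (−1)!! = 1), and f^μ is the number of standard Young tableaux of shape μ. -/

import Mathlib

open scoped BigOperators

/-- A function `ℕ → ℕ` represents an integer partition if it is weakly decreasing and
eventually zero (the value at `i` is the length of row `i` of the Young diagram). -/
def IsPartFun (f : ℕ → ℕ) : Prop :=
  (∀ i j : ℕ, i ≤ j → f j ≤ f i) ∧ ∃ N, ∀ i, N ≤ i → f i = 0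

/-- The Young diagram of `g` is obtained from that of `f` by adding exactly one square. -/
def AddBox (f g : ℕ → ℕ) : Prop :=
  ∃ i, g = Function.update f i (f i + 1)

/-- `T` is an oscillating tableau of length `n`: a sequence `∅ = μ⁰, μ¹, …, μⁿ` of
partitions in which consecutive diagrams differ by adding or removing one square. -/
def IsOscTab (n : ℕ) (T : Fin (n + 1) → ℕ → ℕ) : Prop :=
  (∀ k, IsPartFun (T k)) ∧ T 0 = (fun _ => 0) ∧
    ∀ k : Fin n, AddBox (T k.castSucc) (T k.succ) ∨ AddBox (T k.succ) (T k.castSucc)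

/-- `f̃^μ_n`: the number of oscillating tableaux of shape `μ` and length `n`. -/
noncomputable def oscTabCount (n : ℕ) (mu : ℕ → ℕ) : ℕ :=
  Nat.card {T : Fin (n + 1) → ℕ → ℕ // IsOscTab n T ∧ T (Fin.last n) = mu}

/-- `f^μ`: the number of standard Young tableaux of shape `μ`, i.e. of chains
`∅ = ν⁰ ⊂ ν¹ ⊂ ⋯ ⊂ ν^m = μ` of Young diagrams each obtained from the previous one
by adding one square (here `m = |μ|`). -/
noncomputable def sytCount (m : ℕ) (mu : ℕ → ℕ) : ℕ :=
  Nat.card {T : Fin (m + 1) → ℕ → ℕ //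
    (∀ k, IsPartFun (T k)) ∧ T 0 = (fun _ => 0) ∧ T (Fin.last m) = mu ∧
    ∀ k : Fin m, AddBox (T k.castSucc) (T k.succ)}


namespace OscAux

noncomputable def up (f : ℕ → ℕ) (i : ℕ) : ℕ → ℕ := Function.update f i (f i + 1)
noncomputable def dn (f : ℕ → ℕ) (j : ℕ) : ℕ → ℕ := Function.update f j (f j - 1)
noncomputable def sz (f : ℕ → ℕ) : ℕ := ∑ᶠ i, f i
noncomputable def bnd (f : ℕ → ℕ) : ℕ := sInf {N | ∀ i, N ≤ i → f i = 0}

def Add (f : ℕ → ℕ) (i : ℕ) : Prop := i = 0 ∨ f i < f (i - 1)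
def Rem (f : ℕ → ℕ) (j : ℕ) : Prop := f (j + 1) < f j

instance (f i) : Decidable (Add f i) := by unfold Add; infer_instance
instance (f j) : Decidable (Rem f j) := by unfold Rem; infer_instance

noncomputable def Afin (f : ℕ → ℕ) : Finset ℕ := (Finset.range (bnd f + 1)).filter (Add f)
noncomputable def Rfin (f : ℕ → ℕ) : Finset ℕ := (Finset.range (bnd f)).filter (Rem f)

lemma bnd_spec {f : ℕ → ℕ} (hf : IsPartFun f) : ∀ i, bnd f ≤ i → f i = 0 := by
  have hne : {N | ∀ i, N ≤ i → f i = 0}.Nonempty := hf.2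
  exact Nat.sInf_mem hne

lemma lt_bnd {f : ℕ → ℕ} (hf : IsPartFun f) {i : ℕ} (hi : f i ≠ 0) : i < bnd f := by
  by_contra hc
  exact hi (bnd_spec hf i (le_of_not_gt hc))

lemma supp_finite {f : ℕ → ℕ} (hf : IsPartFun f) : (Function.support f).Finite := by
  apply Set.Finite.subset (Set.finite_Iio (bnd f))
  intro i hi
  exact lt_bnd hf hi

lemma up_apply (f : ℕ → ℕ) (i t : ℕ) : up f i t = if t = i then f i + 1 else f t := by
  simp [up, Function.update]

lemma dn_apply (f : ℕ → ℕ) (j t : ℕ) : dn f j t = if t = j then f j - 1 else f t := by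
  simp [dn, Function.update]

lemma up_dn (f : ℕ → ℕ) (i : ℕ) : dn (up f i) i = f := by
  funext t
  simp [up_apply, dn_apply]
  split <;> simp_all

lemma dn_up {f : ℕ → ℕ} {j : ℕ} (h : f j ≠ 0) : up (dn f j) j = f := by
  funext t
  simp [up_apply, dn_apply]
  split <;> (try omega) <;> simp_all
  omega

lemma sz_up {f : ℕ → ℕ} (hf : (Function.support f).Finite) (i : ℕ) :
    sz (up f i) = sz f + 1 := by
  have h1 : up f i = fun t => f t + (if t = i then 1 else 0) := by
    funext t
    rw [up_apply]
    split <;> simp_all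
  have h2 : (Function.support fun t => (if t = i then 1 else 0 : ℕ)).Finite := by
    apply Set.Finite.subset (Set.finite_singleton i)
    intro t ht
    simp only [Function.mem_support, ne_eq, ite_eq_right_iff, not_forall] at ht
    simp [ht.1]
  rw [sz, h1, finsum_add_distrib hf h2]
  have h3 : ∑ᶠ t, (if t = i then 1 else 0 : ℕ) = 1 := by
    rw [finsum_eq_single _ i (by intro x hx; simp [hx])]
    simp
  rw [h3]; rfl

lemma le_sz {f : ℕ → ℕ} (hf : (Function.support f).Finite) (i : ℕ) : f i ≤ sz f := by
  exact single_le_finsum i hf (fun j => Nat.zero_le _)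

lemma sz_zero_iff {f : ℕ → ℕ} (hf : (Function.support f).Finite) :
    sz f = 0 ↔ f = fun _ => 0 := by
  constructor
  · intro h
    funext i
    have := le_sz hf i
    omega
  · intro h; rw [h, sz]; simp


lemma sz_dn {f : ℕ → ℕ} (hf : (Function.support f).Finite) {j : ℕ} (hj : f j ≠ 0) :
    sz (dn f j) + 1 = sz f := by
  have hsupp : (Function.support (dn f j)).Finite := by
    apply hf.subset
    intro t ht
    simp only [Function.mem_support] at *
    rw [dn_apply] at ht
    by_cases h : t = j
    · subst h
      rw [if_pos rfl] at ht
      omega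
    · rwa [if_neg h] at ht
  have h2 := sz_up hsupp j
  rw [dn_up hj] at h2
  omega

lemma sz_zero_fun : sz (fun _ => 0) = 0 := by
  rw [sz]; simp

lemma up_isPart {f : ℕ → ℕ} (hf : IsPartFun f) {i : ℕ} (hi : Add f i) :
    IsPartFun (up f i) := by
  constructor
  · intro s t hst
    rw [up_apply f i t, up_apply f i s]
    by_cases ht : t = i <;> by_cases hs : s = i
    · rw [if_pos ht, if_pos hs]
    · rw [if_pos ht, if_neg hs]
      have hi0 : i ≠ 0 := by omega
      have hadd : f i < f (i - 1) := hi.resolve_left hi0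
      have h2 : f (i - 1) ≤ f s := hf.1 s (i - 1) (by omega)
      omega
    · rw [if_neg ht, if_pos hs]
      have h2 : f t ≤ f s := hf.1 s t hst
      rw [hs] at h2
      omega
    · rw [if_neg ht, if_neg hs]
      exact hf.1 s t hst
  · obtain ⟨N, hN⟩ := hf.2
    refine ⟨max N (i + 1), fun t ht => ?_⟩
    rw [up_apply, if_neg (by omega)]
    exact hN t (by omega)

lemma dn_isPart {f : ℕ → ℕ} (hf : IsPartFun f) {j : ℕ} (hj : Rem f j) :
    IsPartFun (dn f j) := by
  unfold Rem at hj
  constructor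
  · intro s t hst
    rw [dn_apply f j t, dn_apply f j s]
    by_cases ht : t = j <;> by_cases hs : s = j
    · rw [if_pos ht, if_pos hs]
    · rw [if_pos ht, if_neg hs]
      have h2 : f j ≤ f s := hf.1 s j (by omega)
      omega
    · rw [if_neg ht, if_pos hs]
      have h2 : f t ≤ f (j + 1) := hf.1 (j + 1) t (by omega)
      omega
    · rw [if_neg ht, if_neg hs]
      exact hf.1 s t hst
  · obtain ⟨N, hN⟩ := hf.2
    refine ⟨max N (j + 1), fun t ht => ?_⟩
    rw [dn_apply, if_neg (by omega)]
    exact hN t (by omega)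

lemma add_of_up_isPart {f : ℕ → ℕ} {i : ℕ} (h : IsPartFun (up f i)) : Add f i := by
  rcases Nat.eq_zero_or_pos i with hi | hi
  · exact Or.inl hi
  · right
    have := h.1 (i-1) i (by omega)
    rw [up_apply, up_apply, if_pos rfl, if_neg (by omega)] at this
    omega

lemma mem_Afin {f : ℕ → ℕ} (hf : IsPartFun f) {i : ℕ} : i ∈ Afin f ↔ Add f i := by
  constructor
  · intro h; exact (Finset.mem_filter.1 h).2
  · intro h
    refine Finset.mem_filter.2 ⟨Finset.mem_range.2 ?_, h⟩
    rcases h with h | h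
    · omega
    · have : i - 1 < bnd f := lt_bnd hf (by omega)
      omega

lemma mem_Rfin {f : ℕ → ℕ} (hf : IsPartFun f) {j : ℕ} : j ∈ Rfin f ↔ Rem f j := by
  constructor
  · intro h; exact (Finset.mem_filter.1 h).2
  · intro h
    refine Finset.mem_filter.2 ⟨Finset.mem_range.2 ?_, h⟩
    exact lt_bnd hf (by unfold Rem at h; omega)

lemma card_Afin {f : ℕ → ℕ} (hf : IsPartFun f) :
    (Afin f).card = (Rfin f).card + 1 := by
  have h : Afin f = insert 0 ((Rfin f).image Nat.succ) := by
    ext i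
    rw [mem_Afin hf, Finset.mem_insert, Finset.mem_image]
    constructor
    · rintro (h | h)
      · exact Or.inl h
      · rcases Nat.eq_zero_or_pos i with hi | hi
        · exact Or.inl hi
        · right
          refine ⟨i - 1, (mem_Rfin hf).2 ?_, by omega⟩
          unfold Rem
          rw [show i - 1 + 1 = i by omega]
          exact h
    · rintro (h | ⟨j, hj, rfl⟩)
      · exact Or.inl h
      · right
        have hr := (mem_Rfin hf).1 hj
        unfold Rem at hr
        simpa using hr
  rw [h, Finset.card_insert_of_notMem (by simp), Finset.card_image_of_injective _ Nat.succ_injective]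

lemma up_inj {f : ℕ → ℕ} {i i' : ℕ} (h : up f i = up f i') : i = i' := by
  by_contra hne
  have h1 := congrFun h i
  rw [up_apply, up_apply, if_pos rfl, if_neg hne] at h1
  omega

lemma dn_inj {f : ℕ → ℕ} {j j' : ℕ} (hj : f j ≠ 0) (h : dn f j = dn f j') : j = j' := by
  by_contra hne
  have h1 := congrFun h j
  rw [dn_apply, dn_apply, if_pos rfl, if_neg hne] at h1
  omega

lemma dn_up_comm {f : ℕ → ℕ} {i j : ℕ} (h : i ≠ j) :
    dn (up f i) j = up (dn f j) i := by
  funext t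
  simp only [up_apply, dn_apply]
  split <;> split <;> simp_all <;> omega

lemma exchange {f : ℕ → ℕ} {i j : ℕ} (h : i ≠ j) :
    (Add f i ∧ Rem (up f i) j) ↔ (Rem f j ∧ Add (dn f j) i) := by
  unfold Add Rem
  have edn : dn f j i = f i := by rw [dn_apply, if_neg h]
  rcases Nat.eq_zero_or_pos i with hi | hi
  · subst hi
    have e1 : up f 0 (j + 1) = f (j + 1) := by rw [up_apply, if_neg (by omega)]
    have e2 : up f 0 j = f j := by rw [up_apply, if_neg (Ne.symm h)]
    rw [e1, e2]
    constructor
    · rintro ⟨-, h2⟩; exact ⟨h2, Or.inl rfl⟩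
    · rintro ⟨h1, -⟩; exact ⟨Or.inl rfl, h1⟩
  · rcases eq_or_ne i (j + 1) with hij | hij
    · subst hij
      have e1 : up f (j + 1) (j + 1) = f (j + 1) + 1 := by rw [up_apply, if_pos rfl]
      have e2 : up f (j + 1) j = f j := by rw [up_apply, if_neg (by omega)]
      have e3 : dn f j (j + 1 - 1) = f j - 1 := by rw [dn_apply, if_pos (by omega)]
      rw [e1, e2, e3, edn, show j + 1 - 1 = j by omega]
      omega
    · have e1 : up f i (j + 1) = f (j + 1) := by
        rw [up_apply, if_neg (fun hc => hij hc.symm)]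
      have e2 : up f i j = f j := by rw [up_apply, if_neg (Ne.symm h)]
      have e3 : dn f j (i - 1) = f (i - 1) := by rw [dn_apply, if_neg (by omega)]
      rw [e1, e2, e3, edn]
      tauto

lemma zero_isPart : IsPartFun (fun _ => 0) := ⟨fun _ _ _ => le_rfl, 0, fun _ _ => rfl⟩

def IsSytTab (m : ℕ) (T : Fin (m + 1) → ℕ → ℕ) : Prop :=
  (∀ k, IsPartFun (T k)) ∧ T 0 = (fun _ => 0) ∧
    ∀ k : Fin m, AddBox (T k.castSucc) (T k.succ)

lemma syt_isOsc {m : ℕ} {T : Fin (m + 1) → ℕ → ℕ} (h : IsSytTab m T) : IsOscTab m T :=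
  ⟨h.1, h.2.1, fun k => Or.inl (h.2.2 k)⟩

lemma osc_vanish {n : ℕ} {T : Fin (n + 1) → ℕ → ℕ} (hT : IsOscTab n T) :
    ∀ m, (hm : m ≤ n) → ∀ j, m ≤ j → T ⟨m, by omega⟩ j = 0 := by
  intro m
  induction m with
  | zero =>
    intro hm j _
    have h0 : (⟨0, by omega⟩ : Fin (n + 1)) = 0 := rfl
    rw [h0, hT.2.1]
  | succ m ih =>
    intro hm j hj
    have hstep := hT.2.2 ⟨m, by omega⟩
    have hcast : (⟨m, by omega⟩ : Fin n).castSucc = ⟨m, by omega⟩ := rfl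
    have hsucc : (⟨m, by omega⟩ : Fin n).succ = ⟨m + 1, by omega⟩ := rfl
    rw [hcast, hsucc] at hstep
    rcases hstep with ⟨i, he⟩ | ⟨i, he⟩
    · rcases eq_or_ne j i with rfl | hne
      · exfalso
        have hmono := (hT.1 ⟨m + 1, by omega⟩).1 m j (by omega)
        rw [he] at hmono
        rw [Function.update_self] at hmono
        rw [Function.update_of_ne (by omega)] at hmono
        rw [ih (by omega) m le_rfl] at hmono
        rw [ih (by omega) j (by omega)] at hmono
        omega
      · rw [he, Function.update_of_ne hne]
        exact ih (by omega) j (by omega)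
    · -- T ⟨m⟩ = update (T ⟨m+1⟩) i (+1)
      have h1 : T ⟨m, by omega⟩ j = 0 := ih (by omega) j (by omega)
      rw [he] at h1
      rcases eq_or_ne j i with rfl | hne
      · rw [Function.update_self] at h1
        omega
      · rwa [Function.update_of_ne hne] at h1

lemma osc_bdd {n : ℕ} {T : Fin (n + 1) → ℕ → ℕ} (hT : IsOscTab n T) :
    ∀ m, (hm : m ≤ n) → ∀ j, T ⟨m, by omega⟩ j ≤ m := by
  intro m
  induction m with
  | zero =>
    intro hm j
    have h0 : (⟨0, by omega⟩ : Fin (n + 1)) = 0 := rfl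
    rw [h0, hT.2.1]
  | succ m ih =>
    intro hm j
    have hstep := hT.2.2 ⟨m, by omega⟩
    have hcast : (⟨m, by omega⟩ : Fin n).castSucc = ⟨m, by omega⟩ := rfl
    have hsucc : (⟨m, by omega⟩ : Fin n).succ = ⟨m + 1, by omega⟩ := rfl
    rw [hcast, hsucc] at hstep
    rcases hstep with ⟨i, he⟩ | ⟨i, he⟩
    · rw [he]
      rcases eq_or_ne j i with rfl | hne
      · rw [Function.update_self]
        have := ih (by omega) j
        omega
      · rw [Function.update_of_ne hne]
        have := ih (by omega) j
        omega
    · have h1 : T ⟨m, by omega⟩ j ≤ m := ih (by omega) j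
      rw [he] at h1
      rcases eq_or_ne j i with rfl | hne
      · rw [Function.update_self] at h1
        omega
      · rw [Function.update_of_ne hne] at h1
        omega

instance oscFinite (n : ℕ) (mu : ℕ → ℕ) :
    Finite {T : Fin (n + 1) → ℕ → ℕ // IsOscTab n T ∧ T (Fin.last n) = mu} := by
  apply Finite.of_injective
    (fun T : {T : Fin (n + 1) → ℕ → ℕ // IsOscTab n T ∧ T (Fin.last n) = mu} =>
      (fun k j : Fin (n + 1) => (⟨T.1 k j, by
        have := osc_bdd T.2.1 k.1 (by omega) j
        simp only [Fin.eta] at this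
        omega⟩ : Fin (n + 2))))
  intro T T' he
  apply Subtype.ext
  funext k j
  rcases lt_or_ge j (n + 1) with hj | hj
  · have := congrFun (congrFun he k) ⟨j, hj⟩
    simpa [Fin.mk.injEq] using this
  · have h1 : T.1 k j = 0 := by
      have := osc_vanish T.2.1 k.1 (by omega) j (by omega)
      simpa only [Fin.eta] using this
    have h2 : T'.1 k j = 0 := by
      have := osc_vanish T'.2.1 k.1 (by omega) j (by omega)
      simpa only [Fin.eta] using this
    rw [h1, h2]

instance sytFinite (m : ℕ) (mu : ℕ → ℕ) :
    Finite {T : Fin (m + 1) → ℕ → ℕ //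
      (∀ k, IsPartFun (T k)) ∧ T 0 = (fun _ => 0) ∧ T (Fin.last m) = mu ∧
      ∀ k : Fin m, AddBox (T k.castSucc) (T k.succ)} := by
  apply Finite.of_injective
    (fun T : {T : Fin (m + 1) → ℕ → ℕ //
      (∀ k, IsPartFun (T k)) ∧ T 0 = (fun _ => 0) ∧ T (Fin.last m) = mu ∧
      ∀ k : Fin m, AddBox (T k.castSucc) (T k.succ)} =>
      (⟨T.1, ⟨T.2.1, T.2.2.1, fun k => Or.inl (T.2.2.2.2 k)⟩, T.2.2.2.1⟩ :
        {T : Fin (m + 1) → ℕ → ℕ // IsOscTab m T ∧ T (Fin.last m) = mu}))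
  intro T T' he
  apply Subtype.ext
  have := congrArg Subtype.val he
  exact this

lemma card_eq_sum_fibers {α β : Type*} [Finite α] (f : α → β) (s : Finset β)
    (h : ∀ a, f a ∈ s) : Nat.card α = ∑ b ∈ s, Nat.card {a // f a = b} := by
  classical
  cases nonempty_fintype α
  simp_rw [Nat.card_eq_fintype_card]
  rw [← Finset.card_univ, Finset.card_eq_sum_card_fiberwise (fun x _ => h x)]
  refine Finset.sum_congr rfl fun b _ => ?_
  rw [Fintype.card_subtype]


lemma oscTabCount_zero_one : oscTabCount 0 (fun _ => 0) = 1 := by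
  rw [oscTabCount]
  have : Unique {T : Fin 1 → ℕ → ℕ // IsOscTab 0 T ∧ T (Fin.last 0) = fun _ => 0} := by
    refine ⟨⟨⟨fun _ _ => 0, ⟨fun _ => zero_isPart, rfl, fun k => k.elim0⟩, rfl⟩⟩, ?_⟩
    rintro ⟨T, hT, hlast⟩
    apply Subtype.ext
    show T = _
    funext k
    have hk : k = 0 := Subsingleton.elim k 0
    rw [hk, hT.2.1]
    rfl
  exact Nat.card_unique

lemma oscTabCount_zero_zero {mu : ℕ → ℕ} (hmu : mu ≠ fun _ => 0) : oscTabCount 0 mu = 0 := by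
  rw [oscTabCount]
  have : IsEmpty {T : Fin 1 → ℕ → ℕ // IsOscTab 0 T ∧ T (Fin.last 0) = mu} := by
    constructor
    rintro ⟨T, hT, hlast⟩
    apply hmu
    rw [← hlast]
    have h0 : Fin.last 0 = 0 := rfl
    rw [h0, hT.2.1]
  exact Nat.card_of_isEmpty

lemma sytCount_zero_one : sytCount 0 (fun _ => 0) = 1 := by
  rw [sytCount]
  have : Unique {T : Fin 1 → ℕ → ℕ //
      (∀ k, IsPartFun (T k)) ∧ T 0 = (fun _ => 0) ∧ T (Fin.last 0) = (fun _ => 0) ∧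
      ∀ k : Fin 0, AddBox (T k.castSucc) (T k.succ)} := by
    refine ⟨⟨⟨fun _ _ => 0, fun _ => zero_isPart, rfl, rfl, fun k => k.elim0⟩⟩, ?_⟩
    rintro ⟨T, hT, h0, hlast, hsteps⟩
    apply Subtype.ext
    show T = _
    funext k
    have hk : k = 0 := Subsingleton.elim k 0
    rw [hk, h0]
    rfl
  exact Nat.card_unique

lemma sytCount_zero_zero {mu : ℕ → ℕ} (hmu : mu ≠ fun _ => 0) : sytCount 0 mu = 0 := by
  rw [sytCount]
  have : IsEmpty {T : Fin 1 → ℕ → ℕ //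
      (∀ k, IsPartFun (T k)) ∧ T 0 = (fun _ => 0) ∧ T (Fin.last 0) = mu ∧
      ∀ k : Fin 0, AddBox (T k.castSucc) (T k.succ)} := by
    constructor
    rintro ⟨T, hT, h0, hlast, hsteps⟩
    apply hmu
    rw [← hlast]
    have hh : Fin.last 0 = 0 := rfl
    rw [hh, h0]
  exact Nat.card_of_isEmpty

def OscT (n : ℕ) (mu : ℕ → ℕ) := {T : Fin (n + 1) → ℕ → ℕ // IsOscTab n T ∧ T (Fin.last n) = mu}

def peelOsc (n : ℕ) (mu nu : ℕ → ℕ) (hmu : IsPartFun mu)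
    (hstep : AddBox nu mu ∨ AddBox mu nu) :
    {T : OscT (n + 1) mu // T.1 ((Fin.last n).castSucc) = nu} ≃ OscT n nu where
  toFun := fun TT => ⟨Fin.init TT.1.1, ⟨⟨fun k => TT.1.2.1.1 _, by
      show TT.1.1 (Fin.castSucc 0) = _
      rw [Fin.castSucc_zero]
      exact TT.1.2.1.2.1, fun k => by
      have h := TT.1.2.1.2.2 k.castSucc
      show AddBox (TT.1.1 k.castSucc.castSucc) (TT.1.1 k.succ.castSucc) ∨
        AddBox (TT.1.1 k.succ.castSucc) (TT.1.1 k.castSucc.castSucc)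
      rwa [← Fin.succ_castSucc]⟩, TT.2⟩⟩
  invFun := fun T =>
    ⟨⟨Fin.snoc T.1 mu,
      ⟨⟨fun k => by
          refine Fin.lastCases ?_ (fun k' => ?_) k
          · rw [Fin.snoc_last]; exact hmu
          · rw [Fin.snoc_castSucc]; exact T.2.1.1 k',
        by
          rw [show (0 : Fin (n + 2)) = Fin.castSucc 0 by rw [Fin.castSucc_zero]]
          rw [Fin.snoc_castSucc]
          exact T.2.1.2.1,
        fun k => by
          refine Fin.lastCases ?_ (fun k' => ?_) k
          · rw [Fin.succ_last, Fin.snoc_last, Fin.snoc_castSucc, T.2.2]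
            exact hstep
          · rw [Fin.succ_castSucc, Fin.snoc_castSucc, Fin.snoc_castSucc]
            exact T.2.1.2.2 k'⟩,
       by rw [Fin.snoc_last]⟩⟩,
     ((Fin.snoc_castSucc (α := fun _ => ℕ → ℕ) mu T.1 (Fin.last n)).trans T.2.2)⟩
  left_inv := fun TT => by
    apply Subtype.ext
    apply Subtype.ext
    show Fin.snoc (Fin.init TT.1.1) mu = TT.1.1
    have h := Fin.snoc_init_self TT.1.1
    rw [TT.1.2.2] at h
    exact h
  right_inv := fun T => by
    apply Subtype.ext
    exact Fin.init_snoc (α := fun _ => ℕ → ℕ) mu T.1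

def SytT (m : ℕ) (mu : ℕ → ℕ) := {T : Fin (m + 1) → ℕ → ℕ //
    (∀ k, IsPartFun (T k)) ∧ T 0 = (fun _ => 0) ∧ T (Fin.last m) = mu ∧
    ∀ k : Fin m, AddBox (T k.castSucc) (T k.succ)}

def peelSyt (m : ℕ) (mu nu : ℕ → ℕ) (hmu : IsPartFun mu) (hstep : AddBox nu mu) :
    {T : SytT (m + 1) mu // T.1 ((Fin.last m).castSucc) = nu} ≃ SytT m nu where
  toFun := fun TT => ⟨Fin.init TT.1.1, ⟨fun k => TT.1.2.1 _, by
      show TT.1.1 (Fin.castSucc 0) = _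
      rw [Fin.castSucc_zero]
      exact TT.1.2.2.1, TT.2, fun k => by
      have h := TT.1.2.2.2.2 k.castSucc
      show AddBox (TT.1.1 k.castSucc.castSucc) (TT.1.1 k.succ.castSucc)
      rwa [← Fin.succ_castSucc]⟩⟩
  invFun := fun T => ⟨⟨Fin.snoc T.1 mu, ⟨fun k => by
      refine Fin.lastCases ?_ (fun k' => ?_) k
      · rw [Fin.snoc_last]; exact hmu
      · rw [Fin.snoc_castSucc]; exact T.2.1 k', by
      rw [show (0 : Fin (m + 2)) = Fin.castSucc 0 by rw [Fin.castSucc_zero]]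
      rw [Fin.snoc_castSucc]
      exact T.2.2.1, by
      rw [Fin.snoc_last], fun k => by
      refine Fin.lastCases ?_ (fun k' => ?_) k
      · rw [Fin.succ_last, Fin.snoc_last, Fin.snoc_castSucc, T.2.2.2.1]
        exact hstep
      · rw [Fin.succ_castSucc, Fin.snoc_castSucc, Fin.snoc_castSucc]
        exact T.2.2.2.2 k'⟩⟩, by
      exact ((Fin.snoc_castSucc (α := fun _ => ℕ → ℕ) mu T.1 (Fin.last m)).trans T.2.2.2.1)⟩
  left_inv := fun TT => by
    apply Subtype.ext
    apply Subtype.ext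
    show Fin.snoc (Fin.init TT.1.1) mu = TT.1.1
    have h := Fin.snoc_init_self TT.1.1
    rw [TT.1.2.2.2.1] at h
    exact h
  right_inv := fun T => by
    apply Subtype.ext
    exact Fin.init_snoc (α := fun _ => ℕ → ℕ) mu T.1


instance (n : ℕ) (mu : ℕ → ℕ) : Finite (OscT n mu) := oscFinite n mu
instance (m : ℕ) (mu : ℕ → ℕ) : Finite (SytT m mu) := sytFinite m mu


lemma up_def (f : ℕ → ℕ) (i : ℕ) : up f i = Function.update f i (f i + 1) := rfl

lemma oscT_card (n : ℕ) (mu : ℕ → ℕ) : oscTabCount n mu = Nat.card (OscT n mu) := rfl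
lemma sytT_card (m : ℕ) (mu : ℕ → ℕ) : sytCount m mu = Nat.card (SytT m mu) := rfl

lemma addBox_up {f : ℕ → ℕ} (i : ℕ) : AddBox f (up f i) := ⟨i, rfl⟩

lemma addBox_dn {f : ℕ → ℕ} {j : ℕ} (hj : f j ≠ 0) : AddBox (dn f j) f := by
  refine ⟨j, ?_⟩
  have h := dn_up hj
  rw [up_def] at h
  exact h.symm

lemma osc_rec {n : ℕ} {mu : ℕ → ℕ} (hmu : IsPartFun mu) :
    oscTabCount (n + 1) mu =
      (∑ i ∈ Afin mu, oscTabCount n (up mu i)) + ∑ j ∈ Rfin mu, oscTabCount n (dn mu j) := by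
  classical
  have hpen : ∀ T : OscT (n + 1) mu,
      T.1 ((Fin.last n).castSucc) ∈ (Afin mu).image (up mu) ∪ (Rfin mu).image (dn mu) := by
    rintro ⟨T, hT, hlast⟩
    have hstep := hT.2.2 (Fin.last n)
    rw [Fin.succ_last, hlast] at hstep
    have hνpart : IsPartFun (T ((Fin.last n).castSucc)) := hT.1 _
    rcases hstep with ⟨j, he⟩ | ⟨i, he⟩
    · apply Finset.mem_union_right
      apply Finset.mem_image.2
      have hνdn : T ((Fin.last n).castSucc) = dn mu j := by
        funext t
        rw [dn_apply, he]
        rcases eq_or_ne t j with rfl | h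
        · rw [if_pos rfl, Function.update_self]
          omega
        · rw [if_neg h, Function.update_of_ne h]
      refine ⟨j, ?_, hνdn.symm⟩
      rw [mem_Rfin hmu]
      unfold Rem
      rw [he, Function.update_self, Function.update_of_ne (by omega)]
      have := hνpart.1 j (j + 1) (by omega)
      omega
    · apply Finset.mem_union_left
      apply Finset.mem_image.2
      rw [← up_def] at he
      refine ⟨i, ?_, he.symm⟩
      rw [mem_Afin hmu]
      rw [he] at hνpart
      exact add_of_up_isPart hνpart
  have hdisj : Disjoint ((Afin mu).image (up mu)) ((Rfin mu).image (dn mu)) := by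
    rw [Finset.disjoint_left]
    rintro ν hν1 hν2
    obtain ⟨i, hi, rfl⟩ := Finset.mem_image.1 hν1
    obtain ⟨j, hj, hji⟩ := Finset.mem_image.1 hν2
    have hjr : Rem mu j := (mem_Rfin hmu).1 hj
    have hmuj : mu j ≠ 0 := by unfold Rem at hjr; omega
    have h1 := sz_up (supp_finite hmu) i
    have h2 := sz_dn (supp_finite hmu) hmuj
    rw [hji] at h2
    omega
  rw [oscT_card, card_eq_sum_fibers (fun T : OscT (n + 1) mu => T.1 ((Fin.last n).castSucc))
    _ hpen, Finset.sum_union hdisj]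
  congr 1
  · rw [Finset.sum_image (fun x hx y hy hxy => up_inj hxy)]
    refine Finset.sum_congr rfl fun i hi => ?_
    rw [oscT_card]
    exact Nat.card_congr (peelOsc n mu (up mu i) hmu (Or.inr (addBox_up i)))
  · have hinj : ∀ x ∈ Rfin mu, ∀ y ∈ Rfin mu, dn mu x = dn mu y → x = y := by
      intro x hx y hy hxy
      have : mu x ≠ 0 := by
        have := (mem_Rfin hmu).1 hx; unfold Rem at this; omega
      exact dn_inj this hxy
    rw [Finset.sum_image hinj]
    refine Finset.sum_congr rfl fun j hj => ?_
    rw [oscT_card]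
    have : mu j ≠ 0 := by
      have := (mem_Rfin hmu).1 hj; unfold Rem at this; omega
    exact Nat.card_congr (peelOsc n mu (dn mu j) hmu (Or.inl (addBox_dn this)))

lemma syt_rec {m : ℕ} {mu : ℕ → ℕ} (hmu : IsPartFun mu) :
    sytCount (m + 1) mu = ∑ j ∈ Rfin mu, sytCount m (dn mu j) := by
  classical
  have hpen : ∀ T : SytT (m + 1) mu,
      T.1 ((Fin.last m).castSucc) ∈ (Rfin mu).image (dn mu) := by
    rintro ⟨T, hT, h0, hlast, hsteps⟩
    have hstep := hsteps (Fin.last m)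
    rw [Fin.succ_last, hlast] at hstep
    have hνpart : IsPartFun (T ((Fin.last m).castSucc)) := hT _
    rcases hstep with ⟨j, he⟩
    apply Finset.mem_image.2
    have hνdn : T ((Fin.last m).castSucc) = dn mu j := by
      funext t
      rw [dn_apply, he]
      rcases eq_or_ne t j with rfl | h
      · rw [if_pos rfl, Function.update_self]
        omega
      · rw [if_neg h, Function.update_of_ne h]
    refine ⟨j, ?_, hνdn.symm⟩
    rw [mem_Rfin hmu]
    unfold Rem
    rw [he, Function.update_self, Function.update_of_ne (by omega)]
    have := hνpart.1 j (j + 1) (by omega)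
    omega
  have hinj : ∀ x ∈ Rfin mu, ∀ y ∈ Rfin mu, dn mu x = dn mu y → x = y := by
    intro x hx y hy hxy
    have : mu x ≠ 0 := by
      have := (mem_Rfin hmu).1 hx; unfold Rem at this; omega
    exact dn_inj this hxy
  rw [sytT_card, card_eq_sum_fibers (fun T : SytT (m + 1) mu => T.1 ((Fin.last m).castSucc))
    _ hpen, Finset.sum_image hinj]
  refine Finset.sum_congr rfl fun j hj => ?_
  rw [sytT_card]
  have : mu j ≠ 0 := by
    have := (mem_Rfin hmu).1 hj; unfold Rem at this; omega
  exact Nat.card_congr (peelSyt m mu (dn mu j) hmu (addBox_dn this))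

lemma osc_vanish_count : ∀ (n : ℕ) (nu : ℕ → ℕ), IsPartFun nu → n < sz nu →
    oscTabCount n nu = 0 := by
  intro n
  induction n with
  | zero =>
    intro nu hnu h
    refine oscTabCount_zero_zero fun hc => ?_
    rw [hc, sz_zero_fun] at h
    omega
  | succ n ih =>
    intro nu hnu h
    rw [osc_rec hnu]
    have h1 : ∑ i ∈ Afin nu, oscTabCount n (up nu i) = 0 := by
      refine Finset.sum_eq_zero fun i hi => ?_
      refine ih (up nu i) (up_isPart hnu ((mem_Afin hnu).1 hi)) ?_
      have := sz_up (supp_finite hnu) i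
      omega
    have h2 : ∑ j ∈ Rfin nu, oscTabCount n (dn nu j) = 0 := by
      refine Finset.sum_eq_zero fun j hj => ?_
      have hr := (mem_Rfin hnu).1 hj
      have hnuj : nu j ≠ 0 := by unfold Rem at hr; omega
      refine ih (dn nu j) (dn_isPart hnu hr) ?_
      have := sz_dn (supp_finite hnu) hnuj
      omega
    rw [h1, h2]

lemma syt_vanish_count : ∀ (m : ℕ) (nu : ℕ → ℕ), IsPartFun nu → sz nu ≠ m →
    sytCount m nu = 0 := by
  intro m
  induction m with
  | zero =>
    intro nu hnu h
    refine sytCount_zero_zero fun hc => ?_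
    rw [hc, sz_zero_fun] at h
    omega
  | succ m ih =>
    intro nu hnu h
    rw [syt_rec hnu]
    refine Finset.sum_eq_zero fun j hj => ?_
    have hr := (mem_Rfin hnu).1 hj
    have hnuj : nu j ≠ 0 := by unfold Rem at hr; omega
    refine ih (dn nu j) (dn_isPart hnu hr) ?_
    have h1 := sz_dn (supp_finite hnu) hnuj
    have h2 := le_sz (supp_finite hnu) j
    omega

lemma up_sum : ∀ (m : ℕ), ∀ mu : ℕ → ℕ, IsPartFun mu → sz mu = m →
    (∑ i ∈ Afin mu, sytCount (m + 1) (up mu i)) = (m + 1) * sytCount m mu := by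
  intro m
  induction m using Nat.strong_induction_on with
  | _ m ih =>
  intro mu hmu hsz
  rcases Nat.eq_zero_or_pos m with rfl | hm
  · have hmu0 : mu = fun _ => 0 := (sz_zero_iff (supp_finite hmu)).1 hsz
    subst hmu0
    have hA : Afin (fun _ => 0) = {0} := by
      ext i
      rw [mem_Afin zero_isPart, Finset.mem_singleton]
      unfold Add
      simp
    rw [hA, Finset.sum_singleton]
    have hupP : IsPartFun (up (fun _ => 0) 0) := up_isPart zero_isPart (Or.inl rfl)
    have h1 : sytCount 1 (up (fun _ => 0) 0) = 1 := by
      rw [syt_rec hupP]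
      have hR : Rfin (up (fun _ => 0) 0) = {0} := by
        ext j
        rw [mem_Rfin hupP, Finset.mem_singleton]
        unfold Rem
        rw [up_apply, up_apply, if_neg (by omega)]
        by_cases hj : j = 0 <;> simp [hj]
      rw [hR, Finset.sum_singleton, up_dn, sytCount_zero_one]
    rw [h1, sytCount_zero_one]
  · -- m ≥ 1
    classical
    have key1 : ∀ i ∈ Afin mu,
        sytCount (m + 1) (up mu i)
          = sytCount m mu + ∑ j ∈ (Rfin (up mu i)).erase i, sytCount m (dn (up mu i) j) := by
      intro i hi
      have hiA : Add mu i := (mem_Afin hmu).1 hi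
      have hup : IsPartFun (up mu i) := up_isPart hmu hiA
      rw [syt_rec hup]
      have hiR : i ∈ Rfin (up mu i) := by
        rw [mem_Rfin hup]
        unfold Rem
        rw [up_apply, up_apply, if_pos rfl, if_neg (by omega)]
        have := hmu.1 i (i + 1) (by omega)
        omega
      rw [← Finset.add_sum_erase _ _ hiR, up_dn]
    rw [Finset.sum_congr rfl key1, Finset.sum_add_distrib, Finset.sum_const, smul_eq_mul]
    have hswap : (∑ i ∈ Afin mu, ∑ j ∈ (Rfin (up mu i)).erase i, sytCount m (dn (up mu i) j))
        = ∑ j ∈ Rfin mu, ∑ i ∈ (Afin (dn mu j)).erase j, sytCount m (up (dn mu j) i) := by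
      rw [Finset.sum_sigma' (Afin mu) (fun i => (Rfin (up mu i)).erase i)
        (fun i j => sytCount m (dn (up mu i) j))]
      rw [Finset.sum_sigma' (Rfin mu) (fun j => (Afin (dn mu j)).erase j)
        (fun j i => sytCount m (up (dn mu j) i))]
      refine Finset.sum_nbij' (fun p => ⟨p.2, p.1⟩) (fun p => ⟨p.2, p.1⟩) ?_ ?_ ?_ ?_ ?_
      · rintro ⟨i, j⟩ hp
        rw [Finset.mem_sigma] at hp
        obtain ⟨hi, hj⟩ := hp
        have hiA : Add mu i := (mem_Afin hmu).1 hi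
        have hup : IsPartFun (up mu i) := up_isPart hmu hiA
        have hji : j ≠ i := (Finset.mem_erase.1 hj).1
        have hjR : Rem (up mu i) j := (mem_Rfin hup).1 (Finset.mem_erase.1 hj).2
        have hex := (exchange (f := mu) (Ne.symm hji)).1 ⟨hiA, hjR⟩
        rw [Finset.mem_sigma]
        refine ⟨(mem_Rfin hmu).2 hex.1, Finset.mem_erase.2 ⟨Ne.symm hji, ?_⟩⟩
        exact (mem_Afin (dn_isPart hmu hex.1)).2 hex.2
      · rintro ⟨j, i⟩ hp
        rw [Finset.mem_sigma] at hp
        obtain ⟨hj, hi⟩ := hp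
        have hjR : Rem mu j := (mem_Rfin hmu).1 hj
        have hdn : IsPartFun (dn mu j) := dn_isPart hmu hjR
        have hij : i ≠ j := (Finset.mem_erase.1 hi).1
        have hiA : Add (dn mu j) i := (mem_Afin hdn).1 (Finset.mem_erase.1 hi).2
        have hex := (exchange (f := mu) hij).2 ⟨hjR, hiA⟩
        rw [Finset.mem_sigma]
        refine ⟨(mem_Afin hmu).2 hex.1, Finset.mem_erase.2 ⟨Ne.symm hij, ?_⟩⟩
        exact (mem_Rfin (up_isPart hmu hex.1)).2 hex.2
      · rintro ⟨i, j⟩ _; rfl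
      · rintro ⟨j, i⟩ _; rfl
      · rintro ⟨i, j⟩ hp
        rw [Finset.mem_sigma] at hp
        have hji : j ≠ i := (Finset.mem_erase.1 hp.2).1
        simp only
        rw [dn_up_comm (Ne.symm hji)]
    rw [hswap]
    -- for each j: sytCount m mu + inner = m * sytCount (m-1) (dn mu j)
    have key2 : ∀ j ∈ Rfin mu,
        sytCount m mu + (∑ i ∈ (Afin (dn mu j)).erase j, sytCount m (up (dn mu j) i))
          = m * sytCount (m - 1) (dn mu j) := by
      intro j hj
      have hjR : Rem mu j := (mem_Rfin hmu).1 hj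
      have hmuj : mu j ≠ 0 := by unfold Rem at hjR; omega
      have hdn : IsPartFun (dn mu j) := dn_isPart hmu hjR
      have hjA : j ∈ Afin (dn mu j) := by
        rw [mem_Afin hdn]
        rcases Nat.eq_zero_or_pos j with rfl | hj0
        · exact Or.inl rfl
        · right
          rw [dn_apply, dn_apply, if_pos rfl, if_neg (by omega)]
          have := hmu.1 (j - 1) j (by omega)
          omega
      have hfull := Finset.add_sum_erase (Afin (dn mu j)) (fun i => sytCount m (up (dn mu j) i)) hjA
      try simp only at hfull
      rw [dn_up hmuj] at hfull
      have hszdn : sz (dn mu j) = m - 1 := by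
        have := sz_dn (supp_finite hmu) hmuj
        omega
      have hih := ih (m - 1) (by omega) (dn mu j) hdn hszdn
      rw [show m - 1 + 1 = m by omega] at hih
      rw [hfull]
      exact hih
    have hs2 : ∑ j ∈ Rfin mu,
        (sytCount m mu + ∑ i ∈ (Afin (dn mu j)).erase j, sytCount m (up (dn mu j) i))
        = ∑ j ∈ Rfin mu, m * sytCount (m - 1) (dn mu j) := Finset.sum_congr rfl key2
    rw [Finset.sum_add_distrib, Finset.sum_const, smul_eq_mul, ← Finset.mul_sum] at hs2
    have hsyt : sytCount m mu = ∑ j ∈ Rfin mu, sytCount (m - 1) (dn mu j) := by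
      have h := syt_rec (m := m - 1) hmu
      rw [show m - 1 + 1 = m by omega] at h
      exact h
    rw [← hsyt] at hs2
    rw [card_Afin hmu]
    calc ((Rfin mu).card + 1) * sytCount m mu
          + ∑ j ∈ Rfin mu, ∑ i ∈ (Afin (dn mu j)).erase j, sytCount m (up (dn mu j) i)
        = ((Rfin mu).card * sytCount m mu
          + ∑ j ∈ Rfin mu, ∑ i ∈ (Afin (dn mu j)).erase j, sytCount m (up (dn mu j) i))
          + sytCount m mu := by ring
      _ = m * sytCount m mu + sytCount m mu := by rw [hs2]
      _ = (m + 1) * sytCount m mu := by ring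
  
lemma arith (n r' m1 : ℕ) (h : m1 + 2 * r' + 2 = n + 1) :
    n.choose (2 * r') * Nat.doubleFactorial (2 * r' - 1) * (m1 + 1)
      + n.choose (2 * (r' + 1)) * Nat.doubleFactorial (2 * (r' + 1) - 1)
    = (n + 1).choose (2 * (r' + 1)) * Nat.doubleFactorial (2 * (r' + 1) - 1) := by
  have hdf : Nat.doubleFactorial (2 * (r' + 1) - 1)
      = (2 * r' + 1) * Nat.doubleFactorial (2 * r' - 1) := by
    rcases r' with _ | k
    · simp [Nat.doubleFactorial]
    · rw [show 2 * (k + 1 + 1) - 1 = (2 * (k + 1) - 1) + 2 by omega, Nat.doubleFactorial]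
      congr 1
  have hch : n.choose (2 * r' + 1) * (2 * r' + 1) = n.choose (2 * r') * (n - 2 * r') :=
    Nat.choose_succ_right_eq n (2 * r')
  have hm1 : m1 + 1 = n - 2 * r' := by omega
  have hpas : (n + 1).choose (2 * r' + 2) = n.choose (2 * r' + 1) + n.choose (2 * r' + 2) :=
    Nat.choose_succ_succ (n) (2 * r' + 1)
  rw [show 2 * (r' + 1) = 2 * r' + 2 by ring] at hdf ⊢
  rw [hdf, hm1, hpas]
  calc n.choose (2 * r') * Nat.doubleFactorial (2 * r' - 1) * (n - 2 * r')
        + n.choose (2 * r' + 2) * ((2 * r' + 1) * Nat.doubleFactorial (2 * r' - 1))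
      = (n.choose (2 * r') * (n - 2 * r')) * Nat.doubleFactorial (2 * r' - 1)
        + n.choose (2 * r' + 2) * ((2 * r' + 1) * Nat.doubleFactorial (2 * r' - 1)) := by ring
    _ = (n.choose (2 * r' + 1) * (2 * r' + 1)) * Nat.doubleFactorial (2 * r' - 1)
        + n.choose (2 * r' + 2) * ((2 * r' + 1) * Nat.doubleFactorial (2 * r' - 1)) := by
        rw [hch]
    _ = (n.choose (2 * r' + 1) + n.choose (2 * r' + 2))
        * ((2 * r' + 1) * Nat.doubleFactorial (2 * r' - 1)) := by ring

lemma main_aux : ∀ (n r : ℕ) (mu : ℕ → ℕ), IsPartFun mu → 2 * r ≤ n → sz mu = n - 2 * r →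
    oscTabCount n mu
      = n.choose (2 * r) * Nat.doubleFactorial (2 * r - 1) * sytCount (n - 2 * r) mu := by
  intro n
  induction n with
  | zero =>
    intro r mu hmu h2r hsz
    have hr : r = 0 := by omega
    subst hr
    have hmu0 : mu = fun _ => 0 := by
      refine (sz_zero_iff (supp_finite hmu)).1 ?_
      omega
    subst hmu0
    rw [oscTabCount_zero_one]
    norm_num [Nat.doubleFactorial, sytCount_zero_one]
  | succ n ih =>
    intro r mu hmu h2r hsz
    rcases r with _ | r'
    · -- r = 0
      rw [osc_rec hmu]
      have hup0 : ∑ i ∈ Afin mu, oscTabCount n (up mu i) = 0 := by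
        refine Finset.sum_eq_zero fun i hi => ?_
        refine osc_vanish_count n (up mu i) (up_isPart hmu ((mem_Afin hmu).1 hi)) ?_
        have := sz_up (supp_finite hmu) i
        omega
      have hdn : ∑ j ∈ Rfin mu, oscTabCount n (dn mu j)
          = ∑ j ∈ Rfin mu, sytCount n (dn mu j) := by
        refine Finset.sum_congr rfl fun j hj => ?_
        have hjR := (mem_Rfin hmu).1 hj
        have hmuj : mu j ≠ 0 := by unfold Rem at hjR; omega
        have hszdn : sz (dn mu j) = n - 2 * 0 := by
          have := sz_dn (supp_finite hmu) hmuj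
          omega
        have h := ih 0 (dn mu j) (dn_isPart hmu hjR) (by omega) hszdn
        rw [h]
        norm_num [Nat.doubleFactorial]
      rw [hup0, hdn, zero_add]
      have h := syt_rec (m := n) hmu
      rw [← h]
      norm_num [Nat.doubleFactorial]
    · -- r = r' + 1
      rw [osc_rec hmu]
      have hupsum : ∑ i ∈ Afin mu, oscTabCount n (up mu i)
          = n.choose (2 * r') * Nat.doubleFactorial (2 * r' - 1)
            * ((sz mu + 1) * sytCount (sz mu) mu) := by
        have h1 : ∀ i ∈ Afin mu, oscTabCount n (up mu i)
            = n.choose (2 * r') * Nat.doubleFactorial (2 * r' - 1)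
              * sytCount (sz mu + 1) (up mu i) := by
          intro i hi
          have hupP := up_isPart hmu ((mem_Afin hmu).1 hi)
          have hszup : sz (up mu i) = n - 2 * r' := by
            have := sz_up (supp_finite hmu) i
            omega
          have h := ih r' (up mu i) hupP (by omega) hszup
          rw [h, show n - 2 * r' = sz mu + 1 by omega]
        rw [Finset.sum_congr rfl h1, ← Finset.mul_sum]
        congr 1
        exact up_sum (sz mu) mu hmu rfl
      have hdnsum : ∑ j ∈ Rfin mu, oscTabCount n (dn mu j)
          = n.choose (2 * (r' + 1)) * Nat.doubleFactorial (2 * (r' + 1) - 1)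
            * sytCount (sz mu) mu := by
        rcases Nat.eq_zero_or_pos (sz mu) with hsz0 | hszpos
        · have hR : Rfin mu = ∅ := by
            refine Finset.eq_empty_iff_forall_notMem.2 fun j hj => ?_
            have hjR := (mem_Rfin hmu).1 hj
            have hmuj : mu j ≠ 0 := by unfold Rem at hjR; omega
            have := le_sz (supp_finite hmu) j
            omega
          rw [hR, Finset.sum_empty, Nat.choose_eq_zero_of_lt (by omega)]
          simp
        · have h2rn : 2 * (r' + 1) ≤ n := by omega
          have h1 : ∀ j ∈ Rfin mu, oscTabCount n (dn mu j)
              = n.choose (2 * (r' + 1)) * Nat.doubleFactorial (2 * (r' + 1) - 1)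
                * sytCount (sz mu - 1) (dn mu j) := by
            intro j hj
            have hjR := (mem_Rfin hmu).1 hj
            have hmuj : mu j ≠ 0 := by unfold Rem at hjR; omega
            have hszdn : sz (dn mu j) = n - 2 * (r' + 1) := by
              have := sz_dn (supp_finite hmu) hmuj
              omega
            have h := ih (r' + 1) (dn mu j) (dn_isPart hmu hjR) h2rn hszdn
            rw [h, show n - 2 * (r' + 1) = sz mu - 1 by omega]
          rw [Finset.sum_congr rfl h1, ← Finset.mul_sum]
          congr 1
          have h := syt_rec (m := sz mu - 1) hmu
          rw [show sz mu - 1 + 1 = sz mu by omega] at h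
          exact h.symm
      rw [hupsum, hdnsum]
      have harith := arith n r' (sz mu) (by omega)
      rw [show n + 1 - 2 * (r' + 1) = sz mu by omega]
      calc n.choose (2 * r') * Nat.doubleFactorial (2 * r' - 1)
            * ((sz mu + 1) * sytCount (sz mu) mu)
          + n.choose (2 * (r' + 1)) * Nat.doubleFactorial (2 * (r' + 1) - 1)
            * sytCount (sz mu) mu
          = (n.choose (2 * r') * Nat.doubleFactorial (2 * r' - 1) * (sz mu + 1)
            + n.choose (2 * (r' + 1)) * Nat.doubleFactorial (2 * (r' + 1) - 1))
            * sytCount (sz mu) mu := by ring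
        _ = (n + 1).choose (2 * (r' + 1)) * Nat.doubleFactorial (2 * (r' + 1) - 1)
            * sytCount (sz mu) mu := by rw [harith]


end OscAux

/-- If `μ ⊢ n - 2r` then `f̃^μ_n = C(n,2r) · (2r-1)!! · f^μ`. -/
theorem oscTab_eq_choose_doubleFactorial_syt (n r : ℕ) (h : 2 * r ≤ n)
    (mu : ℕ → ℕ) (hmu : IsPartFun mu) (hsum : ∑ᶠ i, mu i = n - 2 * r) :
    oscTabCount n mu =
      n.choose (2 * r) * Nat.doubleFactorial (2 * r - 1) * sytCount (n - 2 * r) mu := by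
  exact OscAux.main_aux n r mu hmu h hsum
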